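/- Let C be a nonempty compact convex subset of a uniformly convex Banach space and T : C → C satisfy condition (C). Then the K iteration (xₙ) with αₙ, βₙ ∈ [a,b], 0 < a ≤ b < 1, converges strongly to a fixed point of T. -/

import Mathlib

open Filter

private lemma triX {X : Type*} [NormedAddCommGroup X] (u v w : X) :
    ‖u - w‖ ≤ ‖u - v‖ + ‖v - w‖ := by
  simpa [dist_eq_norm] using dist_triangle u v w

private lemma suzukiAux {X : Type*} [NormedAddCommGroup X]
    {C : Set X} {T : X → X} (hTC : ∀ x ∈ C, T x ∈ C)
    (hC : ∀ x ∈ C, ∀ y ∈ C, (1 / 2) * ‖x - T x‖ ≤ ‖x - y‖ → ‖T x - T y‖ ≤ ‖x - y‖)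
    {x y : X} (hx : x ∈ C) (hy : y ∈ C) :
    ‖x - T y‖ ≤ 3 * ‖x - T x‖ + ‖x - y‖ := by
  have h1 : ‖T x - T (T x)‖ ≤ ‖x - T x‖ :=
    hC x hx (T x) (hTC x hx) (by nlinarith [norm_nonneg (x - T x)])
  by_cases h : (1/2) * ‖x - T x‖ ≤ ‖x - y‖
  · have h2 := hC x hx y hy h
    have t1 := triX x (T x) (T y)
    nlinarith [norm_nonneg (x - T x)]
  · push_neg at h
    have h2 : (1/2) * ‖T x - T (T x)‖ ≤ ‖T x - y‖ := by
      have tri : ‖x - T x‖ ≤ ‖x - y‖ + ‖y - T x‖ := triX x y (T x)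
      have hrev : ‖y - T x‖ = ‖T x - y‖ := norm_sub_rev _ _
      linarith
    have h3 := hC (T x) (hTC x hx) y hy h2
    have t2 := triX x (T x) (T y)
    have t3 := triX (T x) (T (T x)) (T y)
    have t4 : ‖T x - y‖ ≤ ‖T x - x‖ + ‖x - y‖ := triX (T x) x y
    have hrev : ‖T x - x‖ = ‖x - T x‖ := norm_sub_rev _ _
    linarith

private lemma onePlusHalf_le_twoPow : ∀ n : ℕ, (1 : ℝ) + n/2 ≤ 2^n := by
  intro n
  induction n with
  | zero => norm_num
  | succ n ih =>
    have h1 : (1:ℝ) ≤ 2^n := one_le_pow₀ (by norm_num)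
    push_cast
    push_cast at ih
    rw [pow_succ]
    nlinarith

private lemma fixedPointExists {X : Type*} [NormedAddCommGroup X] [NormedSpace ℝ X]
    {C : Set X} (hCne : C.Nonempty) (hCcp : IsCompact C) (hCcv : Convex ℝ C)
    {T : X → X} (hTC : ∀ x ∈ C, T x ∈ C)
    (hC : ∀ x ∈ C, ∀ y ∈ C, (1 / 2) * ‖x - T x‖ ≤ ‖x - y‖ → ‖T x - T y‖ ≤ ‖x - y‖) :
    ∃ p ∈ C, T p = p := by
  obtain ⟨c0, hc0⟩ := hCne
  set u : ℕ → X := fun n => Nat.rec c0 (fun _ w => (1/2 : ℝ) • w + (1/2 : ℝ) • T w) n with hu_def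
  have huS : ∀ n, u (n+1) = (1/2 : ℝ) • u n + (1/2 : ℝ) • T (u n) := fun n => rfl
  have huC : ∀ n, u n ∈ C := by
    intro n; induction n with
    | zero => exact hc0
    | succ n ih => rw [huS]; exact hCcv ih (hTC _ ih) (by norm_num) (by norm_num) (by norm_num)
  set d : ℕ → ℝ := fun n => ‖u n - T (u n)‖ with hd_def
  have hdnn : ∀ n, 0 ≤ d n := fun n => norm_nonneg _
  have hcons' : ∀ n, ‖u n - u (n+1)‖ = (1/2) * d n := by
    intro n
    have h : u n - u (n+1) = (1/2 : ℝ) • (u n - T (u n)) := by rw [huS]; module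
    rw [h, norm_smul]; norm_num [hd_def]
  have hne : ∀ n, ‖T (u (n+1)) - T (u n)‖ ≤ (1/2) * d n := by
    intro n
    have h := hC (u n) (huC n) (u (n+1)) (huC (n+1)) (by rw [hcons'])
    rw [norm_sub_rev]; rw [hcons'] at h; exact h
  have hmid : ∀ n, ‖u (n+1) - T (u n)‖ = (1/2) * d n := by
    intro n
    have h : u (n+1) - T (u n) = (1/2 : ℝ) • (u n - T (u n)) := by rw [huS]; module
    rw [h, norm_smul]; norm_num [hd_def]
  have hdsucc : ∀ n, d (n+1) ≤ d n := by
    intro n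
    have t := triX (u (n+1)) (T (u n)) (T (u (n+1)))
    have h2 : ‖T (u n) - T (u (n+1))‖ ≤ (1/2) * d n := by
      rw [norm_sub_rev]; exact hne n
    have h3 := hmid n
    show ‖u (n+1) - T (u (n+1))‖ ≤ d n
    linarith
  have hdanti : Antitone d := antitone_nat_of_succ_le hdsucc
  have hchain : ∀ n i, ‖T (u (i + n)) - T (u i)‖ ≤ (n * (1/2)) * d i := by
    intro n
    induction n with
    | zero => intro i; simp
    | succ n ih =>
      intro i
      have t := triX (T (u (i + n + 1))) (T (u (i + n))) (T (u i))
      have h1 := hne (i + n)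
      have h2 := ih i
      have h3 : d (i + n) ≤ d i := hdanti (Nat.le_add_right i n)
      have he : i + (n + 1) = i + n + 1 := rfl
      rw [he]
      push_cast
      nlinarith [hdnn i]
  have hkey : ∀ n i, 2^n * (d (i + n) - d i) + (1 + n/2) * d i ≤ ‖T (u (i + n)) - u i‖ := by
    intro n
    induction n with
    | zero => intro i; simp [norm_sub_rev (T (u i)) (u i)]; exact le_rfl
    | succ n ih =>
      intro i
      have hc : (1 : ℝ) + n/2 ≤ 2^n := onePlusHalf_le_twoPow n
      have heq : i + (n+1) = i + n + 1 := rfl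
      rw [heq]
      have hid : ((1:ℝ)/2) • (T (u (i + n + 1)) - u i)
          = (T (u (i + n + 1)) - u (i+1)) - (1/2 : ℝ) • (T (u (i + n + 1)) - T (u i)) := by
        rw [huS i]; module
      have hA : ‖T (u (i + n + 1)) - u (i+1)‖ - (1/2) * ‖T (u (i + n + 1)) - T (u i)‖
          ≤ (1/2) * ‖T (u (i + n + 1)) - u i‖ := by
        have h1 : ‖((1:ℝ)/2) • (T (u (i + n + 1)) - u i)‖ = (1/2) * ‖T (u (i + n + 1)) - u i‖ := by
          rw [norm_smul]; norm_num
        have h2 := norm_sub_norm_le (T (u (i + n + 1)) - u (i+1))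
          ((1/2 : ℝ) • (T (u (i + n + 1)) - T (u i)))
        rw [← hid, h1, norm_smul] at h2
        norm_num at h2
        linarith
      have hB := ih (i+1)
      have eB : i + 1 + n = i + n + 1 := Nat.add_right_comm i 1 n
      rw [eB] at hB
      have hCh := hchain (n+1) i
      rw [heq] at hCh
      have hBA : d (i+1) ≤ d i := hdsucc i
      have hD : d (i + n + 1) ≤ d (i + 1) := hdanti (show i + 1 ≤ i + n + 1 by omega)
      have hprod : 0 ≤ (2 * 2^n - (2 + (n:ℝ))) * (d i - d (i+1)) := by
        apply mul_nonneg _ (by linarith)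
        linarith
      push_cast at hCh ⊢
      rw [pow_succ]
      nlinarith [hdnn i, hdnn (i+1)]
  have hbdd : BddBelow (Set.range d) := ⟨0, by rintro _ ⟨n, rfl⟩; exact hdnn n⟩
  have hdt : Tendsto d atTop (nhds (⨅ n, d n)) := tendsto_atTop_ciInf hdanti hbdd
  have hrle : ∀ n, (⨅ n, d n) ≤ d n := fun n => ciInf_le hbdd n
  have hr0 : 0 ≤ ⨅ n, d n := le_ciInf hdnn
  have hrz : (⨅ n, d n) = 0 := by
    by_contra hne0
    have hrpos : 0 < ⨅ n, d n := lt_of_le_of_ne hr0 (Ne.symm hne0)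
    set r := ⨅ n, d n
    obtain ⟨M, hM⟩ : ∃ M : ℝ, ∀ p ∈ C, ∀ q ∈ C, ‖p - q‖ ≤ M := by
      obtain ⟨M, hM⟩ := hCcp.isBounded.subset_closedBall 0
      refine ⟨2*M, fun p hp q hq => ?_⟩
      have h1 := hM hp
      have h2 := hM hq
      simp only [Metric.mem_closedBall, dist_zero_right] at h1 h2
      calc ‖p - q‖ ≤ ‖p‖ + ‖q‖ := norm_sub_le _ _
      _ ≤ 2*M := by linarith
    obtain ⟨n, hn⟩ := exists_nat_gt ((M + 1) / (r/2))
    have hnr : M + 1 < n * (r/2) := by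
      rw [div_lt_iff₀ (by linarith)] at hn
      linarith
    have hev : ∀ᶠ i in atTop, d i < r + (1/2)^n :=
      hdt.eventually_lt_const (lt_add_of_pos_right _ (by positivity))
    obtain ⟨i, hi⟩ := hev.exists
    have hk := hkey n i
    have h1 : r ≤ d (i + n) := hrle (i + n)
    have h2 : r ≤ d i := hrle i
    have h3 : (2:ℝ)^n * (d (i + n) - d i) ≥ -1 := by
      have : d (i + n) - d i ≥ -(1/2)^n := by linarith
      have h4 : (2:ℝ)^n * (d (i+n) - d i) ≥ (2:ℝ)^n * (-(1/2)^n) :=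
        mul_le_mul_of_nonneg_left this (by positivity)
      have h5 : (2:ℝ)^n * ((1/2)^n) = 1 := by
        rw [← mul_pow]; norm_num
      nlinarith
    have h6 : ‖T (u (i + n)) - u i‖ ≤ M := hM _ (hTC _ (huC _)) _ (huC _)
    have h7 : (1 + (n:ℝ)/2) * d i ≥ (1 + (n:ℝ)/2) * r :=
      mul_le_mul_of_nonneg_left h2 (by positivity)
    nlinarith
  obtain ⟨p, hpC, φ, hφ, hφt⟩ := hCcp.tendsto_subseq huC
  have hd0 : Tendsto d atTop (nhds 0) := hrz ▸ hdt
  have h1 : Tendsto (fun k => ‖u (φ k) - T p‖) atTop (nhds 0) := by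
    have hub : ∀ k, ‖u (φ k) - T p‖ ≤ 3 * d (φ k) + ‖u (φ k) - p‖ :=
      fun k => suzukiAux hTC hC (huC (φ k)) hpC
    have hlb : ∀ k, (0:ℝ) ≤ ‖u (φ k) - T p‖ := fun k => norm_nonneg _
    have hrhs : Tendsto (fun k => 3 * d (φ k) + ‖u (φ k) - p‖) atTop (nhds 0) := by
      have ht1 : Tendsto (fun k => d (φ k)) atTop (nhds 0) :=
        hd0.comp hφ.tendsto_atTop
      have ht2 : Tendsto (fun k => ‖u (φ k) - p‖) atTop (nhds 0) :=
        tendsto_iff_norm_sub_tendsto_zero.mp hφt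
      have := (ht1.const_mul 3).add ht2
      simpa using this
    exact tendsto_of_tendsto_of_tendsto_of_le_of_le tendsto_const_nhds hrhs hlb hub
  have h2 : Tendsto (fun k => u (φ k)) atTop (nhds (T p)) :=
    tendsto_iff_norm_sub_tendsto_zero.mpr h1
  exact ⟨p, hpC, tendsto_nhds_unique h2 hφt⟩

private lemma schuBound {X : Type*} [NormedAddCommGroup X] [NormedSpace ℝ X] {u v : X}
    {s δ η : ℝ} (hu : ‖u‖ ≤ 1) (hv : ‖v‖ ≤ 1) (hsum : ‖u + v‖ ≤ 2 - δ) (hδ : 0 < δ)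
    (hη1 : η ≤ s) (hη2 : η ≤ 1 - s) (hs0 : 0 ≤ s) (hs1 : s ≤ 1) :
    ‖(1-s) • u + s • v‖ ≤ 1 - η*δ := by
  rcases le_or_gt s (1/2) with hhalf|hhalf
  · have hid2 : (1 - s) • u + s • v = (1 - 2*s) • u + s • (u + v) := by module
    rw [hid2]
    have hh := norm_add_le ((1 - 2*s) • u) (s • (u + v))
    have e1 : ‖(1 - 2*s) • u‖ = (1 - 2*s) * ‖u‖ := by
      rw [norm_smul, Real.norm_eq_abs, abs_of_nonneg (by linarith : (0:ℝ) ≤ 1 - 2*s)]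
    have e2 : ‖s • (u + v)‖ = s * ‖u + v‖ := by
      rw [norm_smul, Real.norm_eq_abs, abs_of_nonneg hs0]
    rw [e1, e2] at hh
    have m1 : (1 - 2*s) * ‖u‖ ≤ (1 - 2*s) * 1 := mul_le_mul_of_nonneg_left hu (by linarith)
    have m2 : s * ‖u + v‖ ≤ s * (2 - δ) := mul_le_mul_of_nonneg_left hsum hs0
    have m3 : η * δ ≤ s * δ := mul_le_mul_of_nonneg_right hη1 hδ.le
    linarith
  · have hid2 : (1 - s) • u + s • v = (2*s - 1) • v + (1 - s) • (u + v) := by module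
    rw [hid2]
    have hh := norm_add_le ((2*s - 1) • v) ((1 - s) • (u + v))
    have e1 : ‖(2*s - 1) • v‖ = (2*s - 1) * ‖v‖ := by
      rw [norm_smul, Real.norm_eq_abs, abs_of_nonneg (by linarith : (0:ℝ) ≤ 2*s - 1)]
    have e2 : ‖(1 - s) • (u + v)‖ = (1 - s) * ‖u + v‖ := by
      rw [norm_smul, Real.norm_eq_abs, abs_of_nonneg (by linarith : (0:ℝ) ≤ 1 - s)]
    rw [e1, e2] at hh
    have m1 : (2*s - 1) * ‖v‖ ≤ (2*s - 1) * 1 := mul_le_mul_of_nonneg_left hv (by linarith)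
    have m2 : (1 - s) * ‖u + v‖ ≤ (1 - s) * (2 - δ) :=
      mul_le_mul_of_nonneg_left hsum (by linarith)
    have m3 : η * δ ≤ (1 - s) * δ := mul_le_mul_of_nonneg_right hη2 hδ.le
    linarith

theorem stmt_14 {X : Type*} [NormedAddCommGroup X] [NormedSpace ℝ X]
    [UniformConvexSpace X] [CompleteSpace X]
    (C : Set X) (hCne : C.Nonempty) (hCcp : IsCompact C) (hCcv : Convex ℝ C)
    (T : X → X) (hTC : ∀ x ∈ C, T x ∈ C)
    (hC : ∀ x ∈ C, ∀ y ∈ C, (1 / 2) * ‖x - T x‖ ≤ ‖x - y‖ → ‖T x - T y‖ ≤ ‖x - y‖)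
    (a b : ℝ) (ha : 0 < a) (hab : a ≤ b) (hb : b < 1)
    (α β : ℕ → ℝ) (hα : ∀ n, α n ∈ Set.Icc a b) (hβ : ∀ n, β n ∈ Set.Icc a b)
    (x z y : ℕ → X) (hx0 : x 0 ∈ C)
    (hz : ∀ n, z n = (1 - β n) • x n + β n • T (x n))
    (hy : ∀ n, y n = T ((1 - α n) • T (x n) + α n • T (z n)))
    (hx : ∀ n, x (n + 1) = T (y n)) :
    ∃ p ∈ C, T p = p ∧ Tendsto x atTop (nhds p) := by
  obtain ⟨p, hpC, hTp⟩ := fixedPointExists hCne hCcp hCcv hTC hC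
  have hα0 : ∀ n, 0 ≤ α n := fun n => le_trans ha.le (hα n).1
  have hα1 : ∀ n, α n ≤ 1 := fun n => le_trans (hα n).2 hb.le
  have hβ0 : ∀ n, 0 ≤ β n := fun n => le_trans ha.le (hβ n).1
  have hβ1 : ∀ n, β n ≤ 1 := fun n => le_trans (hβ n).2 hb.le
  have memstep : ∀ n, x n ∈ C → z n ∈ C ∧ y n ∈ C ∧ x (n+1) ∈ C := by
    intro n hxn
    have hzn : z n ∈ C := by
      rw [hz n]; exact hCcv hxn (hTC _ hxn) (by linarith [hβ1 n]) (hβ0 n) (by ring)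
    have hwn : (1 - α n) • T (x n) + α n • T (z n) ∈ C :=
      hCcv (hTC _ hxn) (hTC _ hzn) (by linarith [hα1 n]) (hα0 n) (by ring)
    have hyn : y n ∈ C := by rw [hy n]; exact hTC _ hwn
    exact ⟨hzn, hyn, by rw [hx n]; exact hTC _ hyn⟩
  have hxC : ∀ n, x n ∈ C := by
    intro n; induction n with
    | zero => exact hx0
    | succ n ih => exact (memstep n ih).2.2
  have hzC : ∀ n, z n ∈ C := fun n => (memstep n (hxC n)).1
  have hyC : ∀ n, y n ∈ C := fun n => (memstep n (hxC n)).2.1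
  have hq : ∀ q ∈ C, T q = q → ∀ w ∈ C, ‖T w - q‖ ≤ ‖w - q‖ := by
    intro q hqC hTq w hw
    have h := hC q hqC w hw (by rw [hTq]; simp)
    rw [hTq] at h
    rw [norm_sub_rev (T w) q, norm_sub_rev w q]
    exact h
  have comb : ∀ (t : ℝ) (u v q : X), 0 ≤ t → t ≤ 1 →
      ‖(1-t) • u + t • v - q‖ ≤ (1-t) * ‖u - q‖ + t * ‖v - q‖ := by
    intro t u v q h0 h1
    have hid : (1-t) • u + t • v - q = (1-t) • (u - q) + t • (v - q) := by module
    rw [hid]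
    refine (norm_add_le _ _).trans ?_
    rw [norm_smul, norm_smul, Real.norm_of_nonneg (by linarith), Real.norm_of_nonneg h0]
  have hzle : ∀ q ∈ C, T q = q → ∀ n, ‖z n - q‖ ≤ ‖x n - q‖ := by
    intro q hqC hTq n
    rw [hz n]
    refine (comb _ _ _ _ (hβ0 n) (hβ1 n)).trans ?_
    have h1 := hq q hqC hTq (x n) (hxC n)
    nlinarith [hβ0 n, hβ1 n, norm_nonneg (x n - q)]
  have hmain : ∀ q ∈ C, T q = q → ∀ n,
      ‖x (n+1) - q‖ ≤ (1 - α n) * ‖x n - q‖ + α n * ‖z n - q‖ := by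
    intro q hqC hTq n
    have hwn : (1 - α n) • T (x n) + α n • T (z n) ∈ C :=
      hCcv (hTC _ (hxC n)) (hTC _ (hzC n)) (by linarith [hα1 n]) (hα0 n) (by ring)
    calc ‖x (n+1) - q‖ = ‖T (y n) - q‖ := by rw [hx n]
    _ ≤ ‖y n - q‖ := hq q hqC hTq _ (hyC n)
    _ = ‖T ((1 - α n) • T (x n) + α n • T (z n)) - q‖ := by rw [hy n]
    _ ≤ ‖(1 - α n) • T (x n) + α n • T (z n) - q‖ := hq q hqC hTq _ hwn
    _ ≤ (1 - α n) * ‖T (x n) - q‖ + α n * ‖T (z n) - q‖ := comb _ _ _ _ (hα0 n) (hα1 n)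
    _ ≤ (1 - α n) * ‖x n - q‖ + α n * ‖z n - q‖ := by
        have h1 := hq q hqC hTq (x n) (hxC n)
        have h2 := hq q hqC hTq (z n) (hzC n)
        have h3 := hα0 n; have h4 := hα1 n
        nlinarith
  have hdecr : ∀ q ∈ C, T q = q → ∀ n, ‖x (n+1) - q‖ ≤ ‖x n - q‖ := by
    intro q hqC hTq n
    have h1 := hmain q hqC hTq n
    have h2 := hzle q hqC hTq n
    nlinarith [hα0 n, hα1 n]
  have heanti : Antitone (fun n => ‖x n - p‖) := antitone_nat_of_succ_le (hdecr p hpC hTp)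
  have hebdd : BddBelow (Set.range (fun n => ‖x n - p‖)) :=
    ⟨0, by rintro _ ⟨n, rfl⟩; exact norm_nonneg _⟩
  have het : Tendsto (fun n => ‖x n - p‖) atTop (nhds (⨅ n, ‖x n - p‖)) :=
    tendsto_atTop_ciInf heanti hebdd
  have hrle : ∀ m, (⨅ n, ‖x n - p‖) ≤ ‖x m - p‖ := fun m => ciInf_le hebdd m
  have hr0 : 0 ≤ ⨅ n, ‖x n - p‖ := le_ciInf (fun n => norm_nonneg _)
  -- asymptotic regularity
  have har : Tendsto (fun n => ‖x n - T (x n)‖) atTop (nhds 0) := by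
    rcases eq_or_lt_of_le hr0 with hr|hrpos
    · have he0 : Tendsto (fun n => ‖x n - p‖) atTop (nhds 0) := by rw [hr]; exact het
      have hub : ∀ n, ‖x n - T (x n)‖ ≤ 2 * ‖x n - p‖ := by
        intro n
        have t := triX (x n) p (T (x n))
        have h2 : ‖p - T (x n)‖ ≤ ‖x n - p‖ := by
          rw [norm_sub_rev]; exact hq p hpC hTp (x n) (hxC n)
        linarith
      have h2t : Tendsto (fun n => 2 * ‖x n - p‖) atTop (nhds 0) := by
        simpa using he0.const_mul 2
      exact tendsto_of_tendsto_of_tendsto_of_le_of_le tendsto_const_nhds h2t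
        (fun n => norm_nonneg _) hub
    · have hzt : Tendsto (fun n => ‖z n - p‖) atTop (nhds (⨅ n, ‖x n - p‖)) := by
        have hlow : ∀ n, ‖x n - p‖ + (‖x (n+1) - p‖ - ‖x n - p‖)/a ≤ ‖z n - p‖ := by
          intro n
          have h1 := hmain p hpC hTp n
          have h2 := hzle p hpC hTp n
          have h4 : α n * (‖z n - p‖ - ‖x n - p‖) ≤ a * (‖z n - p‖ - ‖x n - p‖) :=
            mul_le_mul_of_nonpos_right (hα n).1 (by linarith)
          have h5 : (‖x (n+1) - p‖ - ‖x n - p‖)/a ≤ ‖z n - p‖ - ‖x n - p‖ := by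
            rw [div_le_iff₀ ha]
            nlinarith
          linarith
        have h6 : Tendsto (fun n => ‖x (n+1) - p‖) atTop (nhds (⨅ n, ‖x n - p‖)) :=
          het.comp (tendsto_add_atTop_nat 1)
        have h7 : Tendsto (fun n => ‖x n - p‖ + (‖x (n+1) - p‖ - ‖x n - p‖)/a) atTop
            (nhds ((⨅ n, ‖x n - p‖) + ((⨅ n, ‖x n - p‖) - (⨅ n, ‖x n - p‖))/a)) :=
          het.add ((h6.sub het).div_const a)
        exact tendsto_of_tendsto_of_tendsto_of_le_of_le (by simpa using h7) het hlow
          (hzle p hpC hTp)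
      by_contra hcon
      obtain ⟨ε, hε, hfreq⟩ : ∃ ε > 0, ∃ᶠ n in atTop, ε ≤ ‖x n - T (x n)‖ := by
        rw [Metric.tendsto_atTop] at hcon
        push_neg at hcon
        obtain ⟨ε, hε, hN⟩ := hcon
        refine ⟨ε, hε, frequently_atTop.mpr (fun N => ?_)⟩
        obtain ⟨n, hn1, hn2⟩ := hN N
        exact ⟨n, hn1, by rwa [Real.dist_eq, sub_zero, abs_of_nonneg (norm_nonneg _)] at hn2⟩
      have he0pos : 0 < ‖x 0 - p‖ := lt_of_lt_of_le hrpos (hrle 0)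
      obtain ⟨δ, hδ, hUC⟩ := exists_forall_closed_ball_dist_add_le_two_sub X (div_pos hε he0pos)
      have hηpos : 0 < min a (1 - b) := lt_min ha (by linarith)
      have claim : ∀ n, ε ≤ ‖x n - T (x n)‖ →
          ‖z n - p‖ ≤ (1 - min a (1 - b) * δ) * ‖x n - p‖ := by
        intro n hn
        have hepos : 0 < ‖x n - p‖ := lt_of_lt_of_le hrpos (hrle n)
        have hu1 : ‖‖x n - p‖⁻¹ • (x n - p)‖ ≤ 1 := by
          rw [norm_smul, Real.norm_eq_abs, abs_of_pos (inv_pos.mpr hepos),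
            inv_mul_cancel₀ hepos.ne']
        have hv1 : ‖‖x n - p‖⁻¹ • (T (x n) - p)‖ ≤ 1 := by
          rw [norm_smul, Real.norm_eq_abs, abs_of_pos (inv_pos.mpr hepos)]
          have hb1 := hq p hpC hTp (x n) (hxC n)
          calc ‖x n - p‖⁻¹ * ‖T (x n) - p‖ ≤ ‖x n - p‖⁻¹ * ‖x n - p‖ :=
            mul_le_mul_of_nonneg_left hb1 (inv_nonneg.mpr hepos.le)
          _ = 1 := inv_mul_cancel₀ hepos.ne'
        have hsub : ε / ‖x 0 - p‖ ≤
            ‖‖x n - p‖⁻¹ • (x n - p) - ‖x n - p‖⁻¹ • (T (x n) - p)‖ := by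
          have hid : ‖x n - p‖⁻¹ • (x n - p) - ‖x n - p‖⁻¹ • (T (x n) - p)
              = ‖x n - p‖⁻¹ • (x n - T (x n)) := by module
          rw [hid, norm_smul, Real.norm_eq_abs, abs_of_pos (inv_pos.mpr hepos)]
          have ht0 : ‖x n - p‖ ≤ ‖x 0 - p‖ := heanti (Nat.zero_le n)
          calc ε / ‖x 0 - p‖ ≤ ε / ‖x n - p‖ := by gcongr
          _ ≤ ‖x n - p‖⁻¹ * ‖x n - T (x n)‖ := by
              rw [div_eq_inv_mul]
              exact mul_le_mul_of_nonneg_left hn (inv_nonneg.mpr hepos.le)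
        have hsum := hUC hu1 hv1 hsub
        have hcomb : ‖(1 - β n) • (‖x n - p‖⁻¹ • (x n - p))
            + β n • (‖x n - p‖⁻¹ • (T (x n) - p))‖ ≤ 1 - min a (1 - b) * δ :=
          schuBound hu1 hv1 hsum hδ (le_trans (min_le_left _ _) (hβ n).1)
            (by have := (hβ n).2; have := min_le_right a (1-b); linarith) (hβ0 n) (hβ1 n)
        have hxu : ‖x n - p‖ • (‖x n - p‖⁻¹ • (x n - p)) = x n - p := by
          rw [smul_smul, mul_inv_cancel₀ hepos.ne', one_smul]
        have hxv : ‖x n - p‖ • (‖x n - p‖⁻¹ • (T (x n) - p)) = T (x n) - p := by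
          rw [smul_smul, mul_inv_cancel₀ hepos.ne', one_smul]
        have hzp : z n - p = ‖x n - p‖ • ((1 - β n) • (‖x n - p‖⁻¹ • (x n - p))
            + β n • (‖x n - p‖⁻¹ • (T (x n) - p))) := by
          rw [smul_add, smul_comm (‖x n - p‖) (1 - β n), smul_comm (‖x n - p‖) (β n),
            hxu, hxv, hz n]
          module
        calc ‖z n - p‖ = ‖x n - p‖ * ‖(1 - β n) • (‖x n - p‖⁻¹ • (x n - p))
            + β n • (‖x n - p‖⁻¹ • (T (x n) - p))‖ := by
              rw [hzp, norm_smul, Real.norm_of_nonneg hepos.le]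
        _ ≤ ‖x n - p‖ * (1 - min a (1 - b) * δ) := mul_le_mul_of_nonneg_left hcomb hepos.le
        _ = (1 - min a (1 - b) * δ) * ‖x n - p‖ := mul_comm _ _
      have hlim2 : Tendsto (fun n => (1 - min a (1 - b) * δ) * ‖x n - p‖ - ‖z n - p‖) atTop
          (nhds ((1 - min a (1 - b) * δ) * (⨅ n, ‖x n - p‖) - (⨅ n, ‖x n - p‖))) :=
        (het.const_mul _).sub hzt
      have hneg : (1 - min a (1 - b) * δ) * (⨅ n, ‖x n - p‖) - (⨅ n, ‖x n - p‖) < 0 := by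
        nlinarith [mul_pos (mul_pos hηpos hδ) hrpos]
      have hev2 := hlim2.eventually_lt_const hneg
      obtain ⟨n, hn1, hn2⟩ := (hev2.and_frequently hfreq).exists
      have := claim n hn2
      linarith
  -- conclusion
  obtain ⟨q, hqC, φ, hφ, hφt⟩ := hCcp.tendsto_subseq hxC
  have harφ : Tendsto (fun k => ‖x (φ k) - T (x (φ k))‖) atTop (nhds 0) :=
    har.comp hφ.tendsto_atTop
  have h1 : Tendsto (fun k => ‖x (φ k) - T q‖) atTop (nhds 0) := by
    have hub : ∀ k, ‖x (φ k) - T q‖ ≤ 3 * ‖x (φ k) - T (x (φ k))‖ + ‖x (φ k) - q‖ :=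
      fun k => suzukiAux hTC hC (hxC (φ k)) hqC
    have hrhs : Tendsto (fun k => 3 * ‖x (φ k) - T (x (φ k))‖ + ‖x (φ k) - q‖) atTop
        (nhds 0) := by
      have ht2 : Tendsto (fun k => ‖x (φ k) - q‖) atTop (nhds 0) :=
        tendsto_iff_norm_sub_tendsto_zero.mp hφt
      simpa using (harφ.const_mul 3).add ht2
    exact tendsto_of_tendsto_of_tendsto_of_le_of_le tendsto_const_nhds hrhs
      (fun k => norm_nonneg _) hub
  have hTq : T q = q := tendsto_nhds_unique (tendsto_iff_norm_sub_tendsto_zero.mpr h1) hφt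
  refine ⟨q, hqC, hTq, ?_⟩
  rw [tendsto_iff_norm_sub_tendsto_zero]
  have hanti : Antitone (fun n => ‖x n - q‖) := antitone_nat_of_succ_le (hdecr q hqC hTq)
  have hbddq : BddBelow (Set.range (fun n => ‖x n - q‖)) :=
    ⟨0, by rintro _ ⟨n, rfl⟩; exact norm_nonneg _⟩
  have hlimq : Tendsto (fun n => ‖x n - q‖) atTop (nhds (⨅ n, ‖x n - q‖)) :=
    tendsto_atTop_ciInf hanti hbddq
  have hsubq : Tendsto (fun k => ‖x (φ k) - q‖) atTop (nhds (⨅ n, ‖x n - q‖)) :=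
    hlimq.comp hφ.tendsto_atTop
  have hzero : Tendsto (fun k => ‖x (φ k) - q‖) atTop (nhds 0) :=
    tendsto_iff_norm_sub_tendsto_zero.mp hφt
  have hiq : (⨅ n, ‖x n - q‖) = 0 := tendsto_nhds_unique hsubq hzero
  rwa [hiq] at hlimq
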